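/- Let R and S be (not necessarily unital, associative) rings, φ_R : R → S an injective ring homomorphism and φ_Z : S → ℤ a surjective ring homomorphism with ker φ_Z = range φ_R, and let q ∈ S satisfy φ_Z(q) = 1. Then there exist additive endomorphisms λ, ρ of R and an element s ∈ R such that φ_R(λ(a)) = q·φ_R(a), φ_R(ρ(a)) = φ_R(a)·q for all a ∈ R, and φ_R(s) = q² − q; the triple (λ, ρ, s) is a homothetic datum on R; and the map R × ℤ → S, (a, n) ↦ φ_R(a) + n•q, is a ring isomorphism from the homothetic extension R(σ,s) to S. -/
import Mathlib


/-- The homothetic extension product on `R × ℤ`. -/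
def homotheticMul {R : Type*} [NonUnitalRing R] (lam rho : R →+ R) (s : R)
    (p q : R × ℤ) : R × ℤ :=
  (p.1 * q.1 + q.2 • rho p.1 + p.2 • lam q.1 + (p.2 * q.2) • s, p.2 * q.2)

/-- Every ideal ring extension of `R` by `ℤ` is equivalent to a homothetic extension:
given an injective ring homomorphism `φ_R : R → S`, a surjective ring homomorphism
`φ_Z : S → ℤ` with `ker φ_Z = range φ_R`, and `q ∈ S` with `φ_Z q = 1`, there is a
homothetic datum `(λ, ρ, s)` on `R` such that `φ_R (λ a) = q·φ_R a`,
`φ_R (ρ a) = φ_R a · q`, `φ_R s = q² − q`, and `(a, n) ↦ φ_R a + n•q` is a ring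
isomorphism from `R(σ,s)` onto `S`. -/
theorem ideal_extension_by_int_is_homothetic {R S : Type*}
    [NonUnitalRing R] [NonUnitalRing S]
    (φR : R →ₙ+* S) (φZ : S →ₙ+* ℤ)
    (hinj : Function.Injective φR) (hsurj : Function.Surjective φZ)
    (hker : ∀ x : S, φZ x = 0 ↔ x ∈ Set.range φR)
    (q : S) (hq : φZ q = 1) :
    ∃ (lam rho : R →+ R) (s : R),
      (∀ a : R, φR (lam a) = q * φR a) ∧
      (∀ a : R, φR (rho a) = φR a * q) ∧
      (φR s = q * q - q) ∧
      (∀ a b : R, lam (a * b) = lam a * b) ∧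
      (∀ a b : R, rho (a * b) = a * rho b) ∧
      (∀ a b : R, a * lam b = rho a * b) ∧
      (∀ a : R, rho (lam a) = lam (rho a)) ∧
      (lam s = rho s) ∧
      (∀ a : R, lam (lam a) = lam a + s * a) ∧
      (∀ a : R, rho (rho a) = rho a + a * s) ∧
      (Function.Bijective (fun p : R × ℤ => φR p.1 + p.2 • q)) ∧
      (∀ x y : R × ℤ,
        φR (x + y).1 + (x + y).2 • q = (φR x.1 + x.2 • q) + (φR y.1 + y.2 • q)) ∧
      (∀ x y : R × ℤ,
        φR (homotheticMul lam rho s x y).1 + (homotheticMul lam rho s x y).2 • q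
          = (φR x.1 + x.2 • q) * (φR y.1 + y.2 • q)) := by
  have h0 : ∀ a : R, φZ (φR a) = 0 := fun a => (hker (φR a)).2 ⟨a, rfl⟩
  have hlam : ∀ a : R, ∃ b : R, φR b = q * φR a := by
    intro a
    have : φZ (q * φR a) = 0 := by simp [map_mul, h0]
    exact (hker _).1 this
  have hrho : ∀ a : R, ∃ b : R, φR b = φR a * q := by
    intro a
    have : φZ (φR a * q) = 0 := by simp [map_mul, h0]
    exact (hker _).1 this
  have hs : ∃ b : R, φR b = q * q - q := by
    have : φZ (q * q - q) = 0 := by simp [map_sub, map_mul, hq]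
    exact (hker _).1 this
  choose lam' hlam' using hlam
  choose rho' hrho' using hrho
  obtain ⟨s, hseq⟩ := hs
  have lamadd : ∀ a b : R, lam' (a + b) = lam' a + lam' b := by
    intro a b
    apply hinj
    simp [map_add, hlam', mul_add]
  have rhoadd : ∀ a b : R, rho' (a + b) = rho' a + rho' b := by
    intro a b
    apply hinj
    simp [map_add, hrho', add_mul]
  refine ⟨AddMonoidHom.mk' lam' lamadd, AddMonoidHom.mk' rho' rhoadd, s, hlam', hrho', hseq,
    ?_, ?_, ?_, ?_, ?_, ?_, ?_, ?_, ?_, ?_⟩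
  · intro a b
    apply hinj
    simp only [AddMonoidHom.mk'_apply, map_mul, hlam', mul_assoc]
  · intro a b
    apply hinj
    simp only [AddMonoidHom.mk'_apply, map_mul, hrho', mul_assoc]
  · intro a b
    apply hinj
    simp only [AddMonoidHom.mk'_apply, map_mul, hlam', hrho', mul_assoc]
  · intro a
    apply hinj
    simp only [AddMonoidHom.mk'_apply, hlam', hrho']
    rw [mul_assoc]
  · apply hinj
    simp only [AddMonoidHom.mk'_apply, hlam', hrho', hseq]
    noncomm_ring
  · intro a
    apply hinj
    simp only [AddMonoidHom.mk'_apply, map_add, map_mul, hlam', hseq]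
    noncomm_ring
  · intro a
    apply hinj
    simp only [AddMonoidHom.mk'_apply, map_add, map_mul, hrho', hseq]
    noncomm_ring
  · constructor
    · rintro ⟨a, m⟩ ⟨b, n⟩ h
      simp only at h
      have hmn : m = n := by
        have := congrArg φZ h
        simpa [map_add, h0, map_zsmul, hq] using this
      subst hmn
      have : φR a = φR b := add_right_cancel h
      exact Prod.ext (hinj this) rfl
    · intro x
      obtain ⟨a, ha⟩ := (hker (x - φZ x • q)).1 (by simp [map_sub, map_zsmul, hq])
      exact ⟨(a, φZ x), by simp [ha]⟩
  · intro x y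
    simp only [Prod.fst_add, Prod.snd_add, map_add, add_smul]
    abel
  · rintro ⟨a, m⟩ ⟨b, n⟩
    simp only [homotheticMul, map_add, map_mul, map_zsmul, AddMonoidHom.mk'_apply, hlam',
      hrho', hseq, smul_sub, smul_mul_assoc, mul_smul_comm, mul_smul, mul_add, add_mul, smul_add]
    rw [smul_comm n m]
    abel
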